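/- For every θ > 0 and all reals λ₁, λ₂, the reduced stress–strength integral satisfies θ · ∫₀¹ (1−y)^{2θ−1} (1 + λ₁ − 2λ₁(1−y)^θ) (1 + λ₂ − λ₂(1−y)^θ) dy = (λ₂ − λ₁ + 3)/6. -/

import Mathlib

open Real MeasureTheory

lemma ssi_integrable (c : ℝ) (hc : 0 < c) :
    IntervalIntegrable (fun y : ℝ => (1 - y) ^ (c - 1)) volume 0 1 := by
  have h : IntervalIntegrable (fun x : ℝ => x ^ (c - 1)) volume 0 1 :=
    intervalIntegral.intervalIntegrable_rpow' (by linarith)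
  have := h.comp_sub_left 1
  simpa using this.symm

lemma ssi_aux (c : ℝ) (hc : 0 < c) :
    ∫ y in (0:ℝ)..1, (1 - y) ^ (c - 1) = 1 / c := by
  have h := intervalIntegral.integral_comp_sub_left (fun u : ℝ => u ^ (c - 1)) 1
    (a := 0) (b := 1)
  simp only [sub_self, sub_zero] at h
  rw [h, integral_rpow (Or.inl (by linarith))]
  rw [Real.one_rpow, Real.zero_rpow (by linarith : c - 1 + 1 ≠ 0)]
  field_simp
  simp [hc.ne']

/-- The reduced stress–strength integral:
`θ ∫₀¹ (1−y)^{2θ−1}(1 + λ₁ − 2λ₁(1−y)^θ)(1 + λ₂ − λ₂(1−y)^θ) dy = (λ₂ − λ₁ + 3)/6`. -/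
theorem stress_strength_integral (θ lam1 lam2 : ℝ) (hθ : 0 < θ) :
    θ * ∫ y in Set.Ioo (0 : ℝ) 1,
        (1 - y) ^ (2 * θ - 1) * (1 + lam1 - 2 * lam1 * (1 - y) ^ θ) *
          (1 + lam2 - lam2 * (1 - y) ^ θ) =
      (lam2 - lam1 + 3) / 6 := by
  set A := (1 + lam1) * (1 + lam2) with hA
  set B := -((1 + lam1) * lam2 + 2 * lam1 * (1 + lam2)) with hB
  set C := 2 * lam1 * lam2 with hC
  have hstep : ∫ y in Set.Ioo (0 : ℝ) 1,
      (1 - y) ^ (2 * θ - 1) * (1 + lam1 - 2 * lam1 * (1 - y) ^ θ) *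
        (1 + lam2 - lam2 * (1 - y) ^ θ)
      = ∫ y in Set.Ioo (0 : ℝ) 1,
        (A * (1 - y) ^ (2 * θ - 1) + B * (1 - y) ^ (3 * θ - 1)
          + C * (1 - y) ^ (4 * θ - 1)) := by
    apply setIntegral_congr_fun measurableSet_Ioo
    intro y hy
    have hy1 : (0:ℝ) < 1 - y := by simp at hy; linarith [hy.2]
    have h1 : (1 - y) ^ (2 * θ - 1) * (1 - y) ^ θ = (1 - y) ^ (3 * θ - 1) := by
      rw [← Real.rpow_add hy1]; ring_nf
    have h2 : (1 - y) ^ (2 * θ - 1) * ((1 - y) ^ θ * (1 - y) ^ θ)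
        = (1 - y) ^ (4 * θ - 1) := by
      rw [← Real.rpow_add hy1, ← Real.rpow_add hy1]; ring_nf
    simp only [hA, hB, hC]
    rw [← h1, ← h2]; ring
  rw [hstep]
  rw [← MeasureTheory.integral_Ioc_eq_integral_Ioo,
    ← intervalIntegral.integral_of_le zero_le_one]
  have i2 := ssi_integrable (2 * θ) (by linarith)
  have i3 := ssi_integrable (3 * θ) (by linarith)
  have i4 := ssi_integrable (4 * θ) (by linarith)
  rw [intervalIntegral.integral_add ((i2.const_mul A).add (i3.const_mul B))
      (i4.const_mul C),
    intervalIntegral.integral_add (i2.const_mul A) (i3.const_mul B),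
    intervalIntegral.integral_const_mul, intervalIntegral.integral_const_mul,
    intervalIntegral.integral_const_mul,
    ssi_aux (2 * θ) (by linarith), ssi_aux (3 * θ) (by linarith),
    ssi_aux (4 * θ) (by linarith)]
  simp only [hA, hB, hC]
  field_simp
  ring
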